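/- As an identity of formal power series in x: for every nonnegative integer r and complex parameters a, b, c with c not a nonpositive integer, (b−a−r+1)_k ≠ 0 for 0 ≤ k ≤ r, and (a−b)_r ≠ 0, one has Σ_{k=0}^{r} C(r,k) · (−1)^k · ((b)_k/(b−a−r+1)_k) · 2F1(a, b+k; c; x) = ((a)_r/(a−b)_r) · 2F1(a+r, b; c; x). -/

import Mathlib

/-- The Pochhammer symbol (rising factorial) `(a)ₖ = a(a+1)⋯(a+k−1)`. -/
noncomputable def poch (a : ℂ) (k : ℕ) : ℂ := (ascPochhammer ℂ k).eval a

/-- The Gauss hypergeometric series `₂F₁(a,b;c;x)` as a formal power series. -/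
noncomputable def gauss2F1 (a b c : ℂ) : PowerSeries ℂ :=
  PowerSeries.mk fun s => poch a s * poch b s / (poch c s * (s.factorial : ℂ))

lemma poch_zero (x : ℂ) : poch x 0 = 1 := by simp [poch]

lemma poch_succ_right (x : ℂ) (k : ℕ) : poch x (k+1) = poch x k * (x + k) := by
  simp [poch, ascPochhammer_succ_right, Polynomial.eval_mul]

lemma poch_succ_left (x : ℂ) (k : ℕ) : poch x (k+1) = x * poch (x+1) k := by
  simp [poch, ascPochhammer_succ_left, Polynomial.eval_mul, Polynomial.eval_comp]

lemma poch_add (x : ℂ) (m n : ℕ) : poch x (m+n) = poch x m * poch (x+m) n := by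
  induction n with
  | zero => simp [poch_zero]
  | succ n ih => rw [← Nat.add_assoc, poch_succ_right, ih, poch_succ_right]; push_cast; ring

lemma poch_ne_zero (c : ℂ) (hc : ∀ n : ℕ, c ≠ -(n : ℂ)) (s : ℕ) : poch c s ≠ 0 := by
  induction s with
  | zero => simp [poch_zero]
  | succ s ih =>
    rw [poch_succ_right]
    refine mul_ne_zero ih ?_
    intro h
    exact hc s (by linear_combination h)

lemma poch_reflect (z : ℂ) (r : ℕ) : poch z r = (-1)^r * poch (-z - r + 1) r := by
  induction r generalizing z with
  | zero => simp [poch_zero]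
  | succ r ih =>
    rw [poch_succ_right, ih z]
    have : (-z - (r+1 : ℕ) + 1 : ℂ) = -z - r := by push_cast; ring
    rw [this, poch_succ_left]
    ring

lemma key (r : ℕ) : ∀ x y : ℂ,
    ∑ k ∈ Finset.range (r+1), (r.choose k : ℂ) * (-1)^k * poch x k * poch (y+k) (r-k)
      = poch (y-x) r := by
  induction r with
  | zero => intro x y; simp [poch_zero]
  | succ r ih =>
    intro x y
    rw [Finset.sum_range_succ']
    have step : ∀ i ∈ Finset.range (r+1),
        ((r+1).choose (i+1) : ℂ) * (-1)^(i+1) * poch x (i+1) * poch (y+(i+1:ℕ)) (r+1-(i+1))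
        = ((r.choose i : ℂ) * (-1)^(i+1) * poch x (i+1) * poch (y+(i+1:ℕ)) (r-i))
          + ((r.choose (i+1) : ℂ) * (-1)^(i+1) * poch x (i+1) * poch (y+(i+1:ℕ)) (r-i)) := by
      intro i hi
      rw [Nat.choose_succ_succ]
      have : r + 1 - (i+1) = r - i := by omega
      rw [this]; push_cast; ring
    rw [Finset.sum_congr rfl step, Finset.sum_add_distrib]
    have hI : ∑ k ∈ Finset.range (r + 1),
        (r.choose k : ℂ) * (-1)^k * poch (x+1) k * poch ((y+1)+k) (r-k) = poch (y-x) r := by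
      have := ih (x+1) (y+1)
      rwa [show (y+1) - (x+1) = y - x by ring] at this
    have e1 : ∑ i ∈ Finset.range (r+1),
        ((r.choose i : ℂ) * (-1)^(i+1) * poch x (i+1) * poch (y+(i+1:ℕ)) (r-i))
        = -x * poch (y-x) r := by
      rw [← hI, Finset.mul_sum]
      apply Finset.sum_congr rfl
      intro i hi
      rw [poch_succ_left]
      rw [show (y + ((i:ℕ)+1:ℕ) : ℂ) = (y+1) + (i:ℕ) by push_cast; ring]
      push_cast; ring
    have expand : ∀ k ∈ Finset.range (r+1),
        (r.choose k : ℂ) * (-1)^k * poch x k * poch (y+k) (r+1-k)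
        = (y+r) * ((r.choose k : ℂ) * (-1)^k * poch x k * poch (y+k) (r-k)) := by
      intro k hk
      have hk' : k ≤ r := by simpa [Nat.lt_succ_iff] using hk
      have h1 : r + 1 - k = (r - k) + 1 := by omega
      rw [h1, poch_succ_right]
      rw [show ((r - k : ℕ) : ℂ) = (r : ℂ) - k by push_cast [Nat.cast_sub hk']; ring]
      ring
    have full : ∑ k ∈ Finset.range (r+2),
        (r.choose k : ℂ) * (-1)^k * poch x k * poch (y+k) (r+1-k)
        = (y+r) * poch (y-x) r := by
      rw [Finset.sum_range_succ]
      rw [Finset.sum_congr rfl expand, ← Finset.mul_sum, ih x y]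
      rw [show (r.choose (r+1) : ℂ) = 0 by simp]
      ring
    have e2 : (∑ i ∈ Finset.range (r+1),
        ((r.choose (i+1) : ℂ) * (-1)^(i+1) * poch x (i+1) * poch (y+(i+1:ℕ)) (r-i)))
        + ((r+1).choose 0 : ℂ) * (-1)^0 * poch x 0 * poch (y+(0:ℕ)) (r+1-0)
        = (y + r) * poch (y-x) r := by
      rw [← full, Finset.sum_range_succ' _ (r+1)]
      congr 1
      · apply Finset.sum_congr rfl
        intro i hi
        have : r + 1 - (i+1) = r - i := by omega
        rw [this]
      · norm_num
    rw [e1, add_assoc, e2, poch_succ_right]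
    push_cast; ring

theorem rearrangement_2F1 (r : ℕ) (a b c : ℂ)
    (hc : ∀ n : ℕ, c ≠ -(n : ℂ))
    (h1 : ∀ k ≤ r, poch (b - a - r + 1) k ≠ 0) (h2 : poch (a - b) r ≠ 0) :
    ∑ k ∈ Finset.range (r + 1),
      PowerSeries.C ((r.choose k : ℂ) * (-1 : ℂ) ^ k * poch b k /
          poch (b - a - r + 1) k) * gauss2F1 a (b + k) c =
    PowerSeries.C (poch a r / poch (a - b) r) * gauss2F1 (a + r) b c := by
  ext s
  simp only [map_sum, PowerSeries.coeff_C_mul, gauss2F1, PowerSeries.coeff_mk]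
  set y : ℂ := b - a - ↑r + 1 with hy
  have hD : poch c s * (s.factorial : ℂ) ≠ 0 :=
    mul_ne_zero (poch_ne_zero c hc s) (Nat.cast_ne_zero.mpr s.factorial_ne_zero)
  have hyr : poch y r ≠ 0 := h1 r le_rfl
  have hterm : ∀ k ∈ Finset.range (r+1),
      (r.choose k : ℂ) * (-1)^k * poch b k / poch y k *
        (poch a s * poch (b + k) s / (poch c s * (s.factorial : ℂ)))
      = ((r.choose k : ℂ) * (-1)^k * poch (b + s) k * poch (y + k) (r - k)) *
        (poch a s * poch b s / (poch y r * (poch c s * (s.factorial : ℂ)))) := by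
    intro k hk
    have hk' : k ≤ r := by simpa [Nat.lt_succ_iff] using hk
    have hyk : poch y k ≠ 0 := h1 k hk'
    have hA : poch b k * poch (b + (k:ℕ)) s = poch b s * poch (b + (s:ℕ)) k := by
      rw [← poch_add, ← poch_add, Nat.add_comm]
    have hB : poch y r = poch y k * poch (y + (k:ℕ)) (r - k) := by
      rw [← poch_add]; congr 1; omega
    have hrk : poch (y + (k:ℕ)) (r - k) ≠ 0 := by
      intro h0; apply hyr; rw [hB, h0, mul_zero]
    rw [hB]
    have hcs : poch c s ≠ 0 := poch_ne_zero c hc s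
    have hfs : (s.factorial : ℂ) ≠ 0 := Nat.cast_ne_zero.mpr s.factorial_ne_zero
    field_simp
    linear_combination ((r.choose k : ℂ) * poch a s) * hA
  rw [Finset.sum_congr rfl hterm, ← Finset.sum_mul, key r (b + s) y]
  have hC : poch a r * poch (a + (r:ℕ)) s = poch a s * poch (a + (s:ℕ)) r := by
    rw [← poch_add, ← poch_add, Nat.add_comm]
  have hD2 : poch (a - b) r = (-1)^r * poch y r := by
    rw [poch_reflect (a - b) r, hy]; ring_nf
  have hE : poch (y - (b + s)) r = (-1)^r * poch (a + s) r := by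
    have := poch_reflect (a + (s:ℕ)) r
    rw [show (-(a + (s:ℕ)) - (r:ℕ) + 1 : ℂ) = y - (b + s) by rw [hy]; ring] at this
    rw [this, ← mul_assoc, ← pow_add, ← two_mul, pow_mul]
    norm_num
  have hm : ((-1:ℂ))^r ≠ 0 := pow_ne_zero r (by norm_num)
  have hsq : ((-1:ℂ))^r * (-1)^r = 1 := by
    rw [← pow_add, ← two_mul, pow_mul]; norm_num
  rw [hE, hD2]
  have hcs : poch c s ≠ 0 := poch_ne_zero c hc s
  have hfs : (s.factorial : ℂ) ≠ 0 := Nat.cast_ne_zero.mpr s.factorial_ne_zero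
  field_simp
  linear_combination (poch (a + (s:ℕ)) r * poch a s * poch b s) * hsq
    - (poch b s) * hC
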